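/- (Product rule for bipartite affine semidefinite programs; dual form of Theorem 1, item 2.) Let the row/column index set be partitioned into two blocks S ∪ T. For i ∈ {1,2}, let J_i be a symmetric real matrix that is block anti-diagonal with respect to the partition, let A_{i,1},…,A_{i,m_i} be real matrices that are block diagonal with respect to the partition, and let b_i ∈ ℝ^{m_i}. Suppose y_i ∈ ℝ^{m_i} satisfies Σ_j y_i[j]·A_{i,j} − J_i ⪰ 0 for i ∈ {1,2}. Then Σ_{j,j'} y_1[j]·y_2[j']·(A_{1,j} ⊗ A_{2,j'}) − J_1 ⊗ J_2 is positive semidefinite; consequently, for every positive semidefinite X with (A_{1,j} ⊗ A_{2,j'}) • X = b_1[j]·b_2[j'] for all j,j', one has (J_1 ⊗ J_2) • X ≤ (y_1ᵀb_1)·(y_2ᵀb_2). -/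

import Mathlib

open Matrix Kronecker BigOperators

/-- Frobenius inner product of two real matrices. -/
def frob {α β : Type*} [Fintype α] [Fintype β] (A X : Matrix α β ℝ) : ℝ :=
  ∑ i, ∑ j, A i j * X i j

open scoped MatrixOrder in
lemma posSemidef_iff_eq_transpose_mul_self {n : Type*} [Fintype n] {A : Matrix n n ℝ} :
    A.PosSemidef ↔ ∃ B : Matrix n n ℝ, A = Bᴴ * B := by
  classical
  constructor
  · intro hA
    obtain ⟨B, hB⟩ := CStarAlgebra.nonneg_iff_eq_star_mul_self.mp hA.nonneg
    exact ⟨B, hB⟩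
  · rintro ⟨B, rfl⟩
    exact posSemidef_conjTranspose_mul_self B

lemma kron_psd {n m : Type*} [Fintype n] [Fintype m] [DecidableEq n] [DecidableEq m]
    {A : Matrix n n ℝ} {C : Matrix m m ℝ} (hA : A.PosSemidef) (hC : C.PosSemidef) :
    (A ⊗ₖ C).PosSemidef := by
  obtain ⟨B, rfl⟩ := posSemidef_iff_eq_transpose_mul_self.mp hA
  obtain ⟨D, rfl⟩ := posSemidef_iff_eq_transpose_mul_self.mp hC
  rw [mul_kronecker_mul]
  have h : (Bᴴ ⊗ₖ Dᴴ) = (B ⊗ₖ D)ᴴ := by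
    ext ⟨i, k⟩ ⟨j, l⟩
    simp [conjTranspose_apply, mul_comm]
  rw [h]
  exact posSemidef_conjTranspose_mul_self _

lemma psd_smul {n : Type*} [Fintype n] {M : Matrix n n ℝ} (hM : M.PosSemidef)
    {c : ℝ} (hc : 0 ≤ c) : (c • M).PosSemidef := by
  constructor
  · show (c • M)ᴴ = c • M
    rw [conjTranspose_smul, hM.1.eq, star_trivial]
  · intro x
    exact (hM.smul hc).2 x

lemma sum3_comm {ι κ μ : Type*} [Fintype ι] [Fintype κ] [Fintype μ] (f : ι → κ → μ → ℝ) :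
    ∑ i, ∑ j, ∑ k, f i j k = ∑ k, ∑ i, ∑ j, f i j k := by
  rw [Finset.sum_comm]
  refine (Finset.sum_congr rfl fun j _ => Finset.sum_comm).trans ?_
  rw [Finset.sum_comm]
  exact Finset.sum_congr rfl fun k _ => Finset.sum_comm

lemma frob_nonneg {n : Type*} [Fintype n] {M X : Matrix n n ℝ}
    (hM : M.PosSemidef) (hX : X.PosSemidef) : 0 ≤ frob M X := by
  classical
  obtain ⟨B, rfl⟩ := posSemidef_iff_eq_transpose_mul_self.mp hX
  have key : frob M (Bᴴ * B) = ∑ k, (fun i => B k i) ⬝ᵥ M *ᵥ (fun i => B k i) := by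
    simp only [frob, Matrix.mul_apply, conjTranspose_apply, star_trivial, Finset.mul_sum,
      dotProduct, Matrix.mulVec]
    rw [sum3_comm]
    exact Finset.sum_congr rfl fun k _ => Finset.sum_congr rfl fun i _ =>
      Finset.sum_congr rfl fun j _ => by ring
  rw [key]
  exact Finset.sum_nonneg fun k _ => by simpa using hM.dotProduct_mulVec_nonneg (fun i => B k i)

lemma frob_sub {n : Type*} [Fintype n] (A B X : Matrix n n ℝ) :
    frob (A - B) X = frob A X - frob B X := by
  simp [frob, Matrix.sub_apply, sub_mul, Finset.sum_sub_distrib]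

lemma frob_sum {n ι : Type*} [Fintype n] [Fintype ι] (f : ι → Matrix n n ℝ) (X : Matrix n n ℝ) :
    frob (∑ a, f a) X = ∑ a, frob (f a) X := by
  simp only [frob, Matrix.sum_apply, Finset.sum_mul]
  rw [sum3_comm]

lemma frob_smul {n : Type*} [Fintype n] (c : ℝ) (A X : Matrix n n ℝ) :
    frob (c • A) X = c * frob A X := by
  simp [frob, Matrix.smul_apply, smul_eq_mul, Finset.mul_sum, mul_assoc]

lemma half_ident {N : Type*} [Fintype N] (P1 J1 P2 J2 : Matrix N N ℝ) :
    (1/2 : ℝ) • ((P1 - J1) ⊗ₖ (P2 + J2) + (P1 + J1) ⊗ₖ (P2 - J2)) = P1 ⊗ₖ P2 - J1 ⊗ₖ J2 := by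
  ext ⟨i, k⟩ ⟨j, l⟩
  simp only [Matrix.smul_apply, Matrix.add_apply, Matrix.sub_apply, kroneckerMap_apply, smul_eq_mul]
  ring

theorem stmt_8 {n : Type*} [Fintype n] [DecidableEq n]
    (p : n → Bool)
    {m1 m2 : ℕ}
    (J1 J2 : Matrix n n ℝ)
    (hJ1sym : J1.IsSymm) (hJ2sym : J2.IsSymm)
    (hJ1anti : ∀ i j, p i = p j → J1 i j = 0)
    (hJ2anti : ∀ i j, p i = p j → J2 i j = 0)
    (A1 : Fin m1 → Matrix n n ℝ) (A2 : Fin m2 → Matrix n n ℝ)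
    (hA1diag : ∀ l i j, p i ≠ p j → A1 l i j = 0)
    (hA2diag : ∀ l i j, p i ≠ p j → A2 l i j = 0)
    (b1 : Fin m1 → ℝ) (b2 : Fin m2 → ℝ)
    (y1 : Fin m1 → ℝ) (y2 : Fin m2 → ℝ)
    (h1 : ((∑ j, y1 j • A1 j) - J1).PosSemidef)
    (h2 : ((∑ j, y2 j • A2 j) - J2).PosSemidef) :
    ((∑ j, ∑ j', (y1 j * y2 j') • (A1 j ⊗ₖ A2 j')) - J1 ⊗ₖ J2).PosSemidef ∧
    ∀ X : Matrix (n × n) (n × n) ℝ, X.PosSemidef →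
      (∀ j j', frob (A1 j ⊗ₖ A2 j') X = b1 j * b2 j') →
      frob (J1 ⊗ₖ J2) X ≤ (∑ j, y1 j * b1 j) * (∑ j, y2 j * b2 j) := by
  set P1 : Matrix n n ℝ := ∑ j, y1 j • A1 j with hP1
  set P2 : Matrix n n ℝ := ∑ j, y2 j • A2 j with hP2
  set d : n → ℝ := fun i => if p i then 1 else -1 with hd
  set D : Matrix n n ℝ := Matrix.diagonal d with hDdef
  have hDH : Dᴴ = D := by
    rw [hDdef, diagonal_conjTranspose, show star d = d from funext fun i => star_trivial _]
  have hP1diag : ∀ i j, p i ≠ p j → P1 i j = 0 := by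
    intro i j hij
    simp only [hP1, Matrix.sum_apply, Matrix.smul_apply, smul_eq_mul]
    exact Finset.sum_eq_zero fun l _ => by rw [hA1diag l i j hij, mul_zero]
  have hP2diag : ∀ i j, p i ≠ p j → P2 i j = 0 := by
    intro i j hij
    simp only [hP2, Matrix.sum_apply, Matrix.smul_apply, smul_eq_mul]
    exact Finset.sum_eq_zero fun l _ => by rw [hA2diag l i j hij, mul_zero]
  have conjD : ∀ (P J : Matrix n n ℝ), (∀ i j, p i ≠ p j → P i j = 0) →
      (∀ i j, p i = p j → J i j = 0) → D * (P - J) * D = P + J := by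
    intro P J hP hJ
    ext i j
    have he : (D * (P - J) * D) i j = d i * (P - J) i j * d j := by
      rw [hDdef, Matrix.mul_diagonal, Matrix.diagonal_mul]
    rw [he, Matrix.sub_apply, Matrix.add_apply]
    by_cases hpq : p i = p j
    · have hdd : d i * d j = 1 := by
        rw [hd]; simp only [hpq]; split <;> norm_num
      rw [hJ i j hpq]
      linear_combination (P i j) * hdd
    · have hdd : d i * d j = -1 := by
        rw [hd]
        rcases Bool.eq_false_or_eq_true (p i) with h | h <;>
          rcases Bool.eq_false_or_eq_true (p j) with h' | h' <;>
            simp_all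
      rw [hP i j hpq]
      linear_combination (-(J i j)) * hdd
  have hplus1 : (P1 + J1).PosSemidef := by
    have h := h1.mul_mul_conjTranspose_same D
    rw [hDH, conjD P1 J1 hP1diag hJ1anti] at h
    exact h
  have hplus2 : (P2 + J2).PosSemidef := by
    have h := h2.mul_mul_conjTranspose_same D
    rw [hDH, conjD P2 J2 hP2diag hJ2anti] at h
    exact h
  have hexp : P1 ⊗ₖ P2 = ∑ j, ∑ j', (y1 j * y2 j') • (A1 j ⊗ₖ A2 j') := by
    ext ⟨i, k⟩ ⟨j, l⟩
    simp only [hP1, hP2, kroneckerMap_apply, Matrix.sum_apply, Matrix.smul_apply, smul_eq_mul]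
    rw [Finset.sum_mul_sum]
    exact Finset.sum_congr rfl fun a _ => Finset.sum_congr rfl fun b _ => by ring
  have hTpsd : ((∑ j, ∑ j', (y1 j * y2 j') • (A1 j ⊗ₖ A2 j')) - J1 ⊗ₖ J2).PosSemidef := by
    rw [← hexp, ← half_ident P1 J1 P2 J2]
    exact psd_smul ((kron_psd h1 hplus2).add (kron_psd hplus1 h2)) (by norm_num)
  refine ⟨hTpsd, fun X hX hC => ?_⟩
  have h0 := frob_nonneg hTpsd hX
  rw [frob_sub] at h0
  have hfs : frob (∑ j, ∑ j', (y1 j * y2 j') • (A1 j ⊗ₖ A2 j')) X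
      = (∑ j, y1 j * b1 j) * (∑ j, y2 j * b2 j) := by
    rw [frob_sum, Finset.sum_mul_sum]
    refine Finset.sum_congr rfl fun a _ => ?_
    rw [frob_sum]
    refine Finset.sum_congr rfl fun b _ => ?_
    rw [frob_smul, hC a b]
    ring
  rw [hfs] at h0
  linarith
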